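/- Every subgroup of the symmetric group Sym(n) on n points (n ≥ 1) can be generated by at most n − 1 elements. -/

import Mathlib

open SimpleGraph

lemma forest_bound {V : Type*} [Fintype V] [Nonempty V]
    (G : SimpleGraph V) [DecidableEq V] [DecidableRel G.Adj]
    (hG : G.IsAcyclic) : G.edgeFinset.card + 1 ≤ Fintype.card V := by
  classical
  set r : V → V := fun v => (G.connectedComponentMk v).out with hr
  have hmkr : ∀ v, G.connectedComponentMk (r v) = G.connectedComponentMk v := fun v => by
    exact Quot.out_eq _
  have hreach : ∀ v, G.Reachable v (r v) :=
    fun v => (ConnectedComponent.exact (hmkr v)).symm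
  set d : V → ℕ := fun v => G.dist v (r v) with hd
  have hsp : ∀ v, ∃ p : G.Walk v (r v), p.IsPath ∧
      ∀ z ∈ p.support, z ≠ v → G.dist z (r v) < d v := by
    intro v
    obtain ⟨wlk, hlen⟩ := (hreach v).exists_walk_length_eq_dist
    refine ⟨wlk.toPath, wlk.toPath.2, ?_⟩
    intro z hz hzv
    have hz' : z ∈ wlk.support := Walk.support_toPath_subset wlk hz
    have h1 : G.dist z (r v) ≤ (wlk.dropUntil z hz').length := SimpleGraph.dist_le _
    have h2 : (wlk.takeUntil z hz').length + (wlk.dropUntil z hz').length = wlk.length := by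
      have h := congrArg Walk.length (wlk.take_spec hz')
      rwa [Walk.length_append] at h
    have h3 : 1 ≤ (wlk.takeUntil z hz').length := by
      rcases Nat.eq_zero_or_pos (wlk.takeUntil z hz').length with h0 | h0
      · exact absurd (Walk.eq_of_length_eq_zero h0).symm hzv
      · exact h0
    have hdv : d v = wlk.length := hlen.symm
    omega
  have hrr : ∀ v, r (r v) = r v := by
    intro v
    show (G.connectedComponentMk (r v)).out = _
    rw [hmkr]
  have hradj : ∀ {x y}, G.Adj x y → r x = r y := by
    intro x y hxy
    show (G.connectedComponentMk x).out = (G.connectedComponentMk y).out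
    rw [SimpleGraph.ConnectedComponent.eq.mpr hxy.reachable]
  -- adjacent vertices have different distances to the root
  have hdiff : ∀ {x y}, G.Adj x y → d x ≠ d y := by
    intro x y hxy heq
    obtain ⟨p1, hp1, hs1⟩ := hsp x
    obtain ⟨p2, hp2, hs2⟩ := hsp y
    have hrxy : r y = r x := (hradj hxy).symm
    set p2' : G.Walk y (r x) := p2.copy rfl hrxy with hp2'def
    have hp2'path : p2'.IsPath := by simpa [hp2'def] using hp2
    have hs2' : ∀ z ∈ p2'.support, z ≠ y → G.dist z (r x) < d y := by
      intro z hz hzy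
      have hz2 : z ∈ p2.support := by simpa [hp2'def] using hz
      have := hs2 z hz2 hzy
      rwa [hrxy] at this
    have hxny : x ≠ y := G.ne_of_adj hxy
    have hxp2 : x ∉ p2'.support := by
      intro hx
      have h5 := hs2' x hx hxny
      have hzz : G.dist x (r x) = d x := rfl
      omega
    have hq2path : (Walk.cons hxy p2').IsPath := hp2'path.cons hxp2
    have hneq : p1 ≠ Walk.cons hxy p2' := by
      intro hcontra
      have he1 : s(x, y) ∈ (Walk.cons hxy p2').edges := by
        simp [Walk.edges_cons]
      rw [← hcontra] at he1
      have hy1 : y ∈ p1.support := Walk.snd_mem_support_of_mem_edges p1 he1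
      have h5 := hs1 y hy1 (Ne.symm hxny)
      have hzz : G.dist y (r x) = d y := by rw [← hrxy]
      omega
    exact hneq (congrArg Subtype.val (hG.path_unique ⟨p1, hp1⟩ ⟨Walk.cons hxy p2', hq2path⟩))
  -- core injectivity: a vertex has at most one neighbour farther from the root
  have hcore : ∀ z y1 y2, G.Adj z y1 → G.Adj z y2 → d y1 < d z → d y2 < d z → y1 = y2 := by
    intro z y1 y2 ha1 ha2 hd1 hd2
    by_contra hne
    obtain ⟨p1, hp1, hs1⟩ := hsp y1
    obtain ⟨p2, hp2, hs2⟩ := hsp y2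
    have hr1 : r y1 = r z := hradj ha1.symm
    have hr2 : r y2 = r z := hradj ha2.symm
    set p1' : G.Walk y1 (r z) := p1.copy rfl hr1 with hp1'def
    set p2' : G.Walk y2 (r z) := p2.copy rfl hr2 with hp2'def
    have hp1'path : p1'.IsPath := by simpa [hp1'def] using hp1
    have hp2'path : p2'.IsPath := by simpa [hp2'def] using hp2
    have hs1' : ∀ w ∈ p1'.support, w ≠ y1 → G.dist w (r z) < d y1 := by
      intro w hw hwy
      have hw1 : w ∈ p1.support := by simpa [hp1'def] using hw
      have := hs1 w hw1 hwy
      rwa [hr1] at this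
    have hs2' : ∀ w ∈ p2'.support, w ≠ y2 → G.dist w (r z) < d y2 := by
      intro w hw hwy
      have hw2 : w ∈ p2.support := by simpa [hp2'def] using hw
      have := hs2 w hw2 hwy
      rwa [hr2] at this
    have hz1 : z ∉ p1'.support := by
      intro hzin
      have := hs1' z hzin (Ne.symm (G.ne_of_adj ha1).symm)
      have hzz : G.dist z (r z) = d z := rfl
      omega
    have hz2 : z ∉ p2'.support := by
      intro hzin
      have := hs2' z hzin (Ne.symm (G.ne_of_adj ha2).symm)
      have hzz : G.dist z (r z) = d z := rfl
      omega
    have hq1path : (Walk.cons ha1 p1').IsPath := hp1'path.cons hz1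
    have hq2path : (Walk.cons ha2 p2').IsPath := hp2'path.cons hz2
    have hneq : Walk.cons ha1 p1' ≠ Walk.cons ha2 p2' := by
      intro hcontra
      have he1 : s(z, y1) ∈ (Walk.cons ha1 p1').edges := by simp [Walk.edges_cons]
      rw [hcontra] at he1
      rw [Walk.edges_cons] at he1
      rcases List.mem_cons.mp he1 with h | h
      · rcases Sym2.eq_iff.mp h with ⟨-, h2⟩ | ⟨-, h2⟩
        · exact hne h2
        · exact (G.ne_of_adj ha1) h2.symm
      · have : z ∈ p2'.support := Walk.fst_mem_support_of_mem_edges p2' h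
        exact hz2 this
    exact hneq (congrArg Subtype.val
      (hG.path_unique ⟨Walk.cons ha1 p1', hq1path⟩ ⟨Walk.cons ha2 p2', hq2path⟩))
  -- choose the far endpoint of each edge
  have hchoice : ∀ e ∈ G.edgeFinset, ∃ x y, e = s(x, y) ∧ G.Adj x y ∧ d y < d x := by
    intro e he
    rw [mem_edgeFinset] at he
    induction e with
    | _ x y =>
      have hadj : G.Adj x y := (G.mem_edgeSet).mp he
      rcases lt_or_gt_of_ne (hdiff hadj) with h | h
      · exact ⟨y, x, Sym2.eq_swap, hadj.symm, h⟩
      · exact ⟨x, y, rfl, hadj, h⟩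
  choose far near hfe hfadj hflt using hchoice
  obtain ⟨v⟩ := ‹Nonempty V›
  set v₀ := r v with hv₀
  have hd0 : d v₀ = 0 := by
    show G.dist (r v) (r (r v)) = 0
    rw [hrr]
    exact SimpleGraph.dist_self
  set f : Sym2 V → V := fun e => if he : e ∈ G.edgeFinset then far e he else v₀ with hf
  have hcard : G.edgeFinset.card ≤ (Finset.univ.erase v₀).card := by
    apply Finset.card_le_card_of_injOn f
    · intro e he
      rw [Finset.mem_coe] at he ⊢; rw [Finset.mem_erase]
      refine ⟨?_, Finset.mem_univ _⟩
      rw [hf]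
      simp only [he, dif_pos]
      intro hcontra
      have h1 : d (far e he) ≠ 0 := by
        have := hflt e he
        omega
      rw [hcontra, hd0] at h1
      exact h1 rfl
    · intro e1 he1' e2 he2' hfeq
      have he1 : e1 ∈ G.edgeFinset := he1'
      have he2 : e2 ∈ G.edgeFinset := he2'
      rw [hf] at hfeq
      simp only [he1, he2, dif_pos] at hfeq
      have h1 := hfadj e1 he1
      have h2 := hfadj e2 he2
      rw [hfeq] at h1
      have hl1 := hflt e1 he1
      have hl2 := hflt e2 he2
      rw [hfeq] at hl1
      have := hcore (far e2 he2) (near e1 he1) (near e2 he2) h1 h2 hl1 hl2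
      rw [hfe e1 he1, hfe e2 he2, hfeq, this]
  have : (Finset.univ.erase v₀).card = Fintype.card V - 1 := by
    rw [Finset.card_erase_of_mem (Finset.mem_univ _), Finset.card_univ]
  have hpos : 1 ≤ Fintype.card V := Fintype.card_pos
  omega

namespace JerrumAux

open Equiv Subgroup

variable {N : ℕ}

/-- The minimal moved point of a permutation (junk value `0` for the identity). -/
noncomputable def mp (g : Equiv.Perm (Fin (N + 1))) : Fin (N + 1) :=
  if h : g.support.Nonempty then g.support.min' h else 0

variable {g p : Equiv.Perm (Fin (N + 1))}

lemma support_nonempty (hg : g ≠ 1) : g.support.Nonempty :=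
  Finset.nonempty_iff_ne_empty.mpr fun h => hg (Equiv.Perm.support_eq_empty_iff.mp h)

lemma mp_mem (hg : g ≠ 1) : mp g ∈ g.support := by
  rw [mp, dif_pos (support_nonempty hg)]
  exact Finset.min'_mem _ _

lemma mp_move (hg : g ≠ 1) : g (mp g) ≠ mp g :=
  Equiv.Perm.mem_support.mp (mp_mem hg)

lemma mp_fix (hg : g ≠ 1) {x : Fin (N + 1)} (hx : x < mp g) : g x = x := by
  by_contra h
  have hx' : x ∈ g.support := Equiv.Perm.mem_support.mpr h
  have : mp g ≤ x := by
    rw [mp, dif_pos (support_nonempty hg)]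
    exact Finset.min'_le _ _ hx'
  exact absurd hx (not_lt.mpr this)

lemma mp_fix_inv (hg : g ≠ 1) {x : Fin (N + 1)} (hx : x < mp g) : g⁻¹ x = x := by
  conv_lhs => rw [← mp_fix hg hx]
  exact g.symm_apply_apply x

lemma mp_lt (hg : g ≠ 1) : mp g < g (mp g) := by
  rcases lt_trichotomy (g (mp g)) (mp g) with h | h | h
  · exact absurd (g.injective (by rw [mp_fix hg h] : g (g (mp g)) = g (mp g)))
      (mp_move hg)
  · exact absurd h (mp_move hg)
  · exact h

lemma mp_val_lt (hg : g ≠ 1) : (mp g : ℕ) < N := by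
  have h := mp_lt hg
  have h2 : ((g (mp g) : Fin (N + 1)) : ℕ) ≤ N := Fin.is_le _
  have : ((mp g : Fin (N + 1)) : ℕ) < ((g (mp g) : Fin (N + 1)) : ℕ) := h
  omega

lemma lt_mp_of_fix (hp : p ≠ 1) {c : Fin (N + 1)} (h : ∀ x, x ≤ c → p x = x) :
    c < mp p := by
  by_contra hc
  exact mp_move hp (h _ (not_lt.mp hc))

/-- weight of a generator -/
noncomputable def wt (g : Equiv.Perm (Fin (N + 1))) : ℕ := N - (mp g : ℕ)

/-- potential of a generating set -/
noncomputable def pot (S : Finset (Equiv.Perm (Fin (N + 1)))) : ℕ := ∑ g ∈ S, wt g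

lemma one_le_wt (hg : g ≠ 1) : 1 ≤ wt g := by
  have := mp_val_lt hg
  rw [wt]; omega

lemma wt_lt_wt (hg : g ≠ 1) (h : mp g < mp p) : wt p < wt g := by
  have h1 := mp_val_lt hg
  have h2 : (mp g : ℕ) < (mp p : ℕ) := h
  rw [wt, wt]; omega

lemma closure_insert_one {G : Type*} [Group G] (s : Set G) :
    closure (insert (1 : G) s) = closure s :=
  le_antisymm ((closure_le _).2 (Set.insert_subset (one_mem _) subset_closure))
    (closure_mono (Set.subset_insert _ _))

/-- The exchange step: if `S` is a potential-minimal generating set, `g ∈ S`, and `p ∈ H`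
fixes everything up to `mp g` and can replace `g` as a generator, we get a contradiction. -/
lemma improve (H : Subgroup (Equiv.Perm (Fin (N + 1))))
    (S : Finset (Equiv.Perm (Fin (N + 1)))) (hS1 : (1 : Equiv.Perm (Fin (N + 1))) ∉ S)
    (hSH : closure (S : Set (Equiv.Perm (Fin (N + 1)))) = H)
    (hmin : ∀ T : Finset (Equiv.Perm (Fin (N + 1))),
      (1 : Equiv.Perm (Fin (N + 1))) ∉ T →
      closure (T : Set (Equiv.Perm (Fin (N + 1)))) = H → pot S ≤ pot T)
    (hg : g ∈ S) (hpH : p ∈ H)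
    (hgen : g ∈ closure (insert p ((S.erase g : Finset _) : Set (Equiv.Perm (Fin (N + 1))))))
    (hfix : ∀ x, x ≤ mp g → p x = x) : False := by
  have hgne : g ≠ 1 := fun h => hS1 (h ▸ hg)
  have hSsub : (S : Set (Equiv.Perm (Fin (N + 1)))) ⊆ H := hSH ▸ subset_closure
  have herase_sub : ((S.erase g : Finset _) : Set (Equiv.Perm (Fin (N + 1)))) ⊆ H :=
    fun x hx => hSsub (Finset.mem_coe.mpr (Finset.mem_of_mem_erase (Finset.mem_coe.mp hx)))
  have hsum : pot (S.erase g) + wt g = pot S := Finset.sum_erase_add S _ hg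
  by_cases hp1 : p = 1
  · -- we can simply delete g
    set T := S.erase g with hT
    have h1T : (1 : Equiv.Perm (Fin (N + 1))) ∉ T := fun h => hS1 (Finset.mem_of_mem_erase h)
    have hgenT : g ∈ closure ((T : Finset _) : Set (Equiv.Perm (Fin (N + 1)))) := by
      rw [hp1, closure_insert_one] at hgen
      exact hgen
    have hclT : closure ((T : Finset _) : Set (Equiv.Perm (Fin (N + 1)))) = H := by
      apply le_antisymm ((closure_le _).2 herase_sub)
      rw [← hSH]
      apply (closure_le _).2
      intro x hx
      by_cases hxg : x = g
      · exact hxg ▸ hgenT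
      · exact subset_closure (Finset.mem_coe.mpr
          (Finset.mem_erase.mpr ⟨hxg, Finset.mem_coe.mp hx⟩))
    have := hmin T h1T hclT
    have := one_le_wt hgne
    omega
  · set T := insert p (S.erase g) with hT
    have h1T : (1 : Equiv.Perm (Fin (N + 1))) ∉ T := by
      intro h
      rcases Finset.mem_insert.mp h with h | h
      · exact hp1 h.symm
      · exact hS1 (Finset.mem_of_mem_erase h)
    have hcoeT : ((T : Finset _) : Set (Equiv.Perm (Fin (N + 1)))) =
        insert p ((S.erase g : Finset _) : Set _) := Finset.coe_insert _ _
    have hclT : closure ((T : Finset _) : Set (Equiv.Perm (Fin (N + 1)))) = H := by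
      apply le_antisymm
      · apply (closure_le _).2
        rw [hcoeT]
        exact Set.insert_subset hpH herase_sub
      · rw [← hSH]
        apply (closure_le _).2
        intro x hx
        by_cases hxg : x = g
        · rw [hcoeT]; exact hxg ▸ hgen
        · exact subset_closure (Finset.mem_coe.mpr (Finset.mem_insert.mpr
            (Or.inr (Finset.mem_erase.mpr ⟨hxg, Finset.mem_coe.mp hx⟩))))
    have hwt : wt p < wt g := wt_lt_wt hgne (lt_mp_of_fix hp1 hfix)
    have hpotT : pot T ≤ wt p + pot (S.erase g) := by
      by_cases hpe : p ∈ S.erase g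
      · rw [hT, Finset.insert_eq_self.mpr hpe]
        omega
      · rw [hT, pot, Finset.sum_insert hpe]
        exact le_refl _
    have := hmin T h1T hclT
    omega



lemma key (H : Subgroup (Equiv.Perm (Fin (N + 1)))) :
    ∃ S : Finset (Equiv.Perm (Fin (N + 1))),
      S.card ≤ N ∧ closure (S : Set (Equiv.Perm (Fin (N + 1)))) = H := by
  classical
  -- the set of achievable potentials
  set A : Set ℕ := {m | ∃ S : Finset (Equiv.Perm (Fin (N + 1))),
      (1 : Equiv.Perm (Fin (N + 1))) ∉ S ∧
      closure (S : Set (Equiv.Perm (Fin (N + 1)))) = H ∧ pot S = m} with hA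
  have hAne : A.Nonempty := by
    set S₀ := ((H : Set (Equiv.Perm (Fin (N + 1)))).toFinite.toFinset).erase 1 with hS₀
    refine ⟨pot S₀, S₀, Finset.notMem_erase _ _, ?_, rfl⟩
    apply le_antisymm
    · apply (closure_le _).2
      intro x hx
      have := Finset.mem_of_mem_erase (Finset.mem_coe.mp hx)
      exact (Set.Finite.mem_toFinset _).mp this
    · intro x hx
      by_cases hx1 : x = 1
      · exact hx1 ▸ one_mem _
      · exact subset_closure (Finset.mem_coe.mpr (Finset.mem_erase.mpr
          ⟨hx1, (Set.Finite.mem_toFinset _).mpr hx⟩))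
  obtain ⟨S, hS1, hSH, hpotS⟩ := Nat.sInf_mem hAne
  have hmin : ∀ T : Finset (Equiv.Perm (Fin (N + 1))),
      (1 : Equiv.Perm (Fin (N + 1))) ∉ T →
      closure (T : Set (Equiv.Perm (Fin (N + 1)))) = H → pot S ≤ pot T := by
    intro T h1 h2
    rw [hpotS]
    exact Nat.sInf_le ⟨T, h1, h2, rfl⟩
  refine ⟨S, ?_, hSH⟩
  by_contra hcard
  push_neg at hcard
  have hSne1 : ∀ g ∈ S, g ≠ 1 := fun g hgS h => hS1 (h ▸ hgS)
  have hSsub : (S : Set (Equiv.Perm (Fin (N + 1)))) ⊆ H := hSH ▸ subset_closure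
  by_cases hinj : Set.InjOn (fun g => s(mp g, g (mp g))) (S : Set (Equiv.Perm (Fin (N + 1))))
  case neg =>
    -- two generators with the same edge: easy exchange
    rw [Set.InjOn] at hinj
    push_neg at hinj
    obtain ⟨g, hgS, h, hhS, hedge, hgh⟩ := hinj
    have hgS' : g ∈ S := hgS
    have hhS' : h ∈ S := hhS
    have hgne : g ≠ 1 := hSne1 g hgS'
    have hhne : h ≠ 1 := hSne1 h hhS'
    have hedge' : s(mp g, g (mp g)) = s(mp h, h (mp h)) := hedge
    have hkey : mp g = mp h ∧ g (mp g) = h (mp h) := by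
      rcases Sym2.eq_iff.mp hedge' with ⟨h1, h2⟩ | ⟨h1, h2⟩
      · exact ⟨h1, h2⟩
      · exfalso
        have l1 := mp_lt hgne
        have l2 := mp_lt hhne
        rw [h2] at l1
        rw [← h1] at l2
        exact absurd (l1.trans l2) (lt_irrefl _)
    obtain ⟨hmp, himg⟩ := hkey
    -- exchange g for h⁻¹ * g
    refine improve H S hS1 hSH hmin hgS' (p := h⁻¹ * g) (mul_mem (inv_mem (hSsub hhS)) (hSsub hgS)) ?_ ?_ |>.elim
    · -- g = h * (h⁻¹ * g)
      have hh' : h ∈ closure (insert (h⁻¹ * g) ((S.erase g : Finset _) :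
          Set (Equiv.Perm (Fin (N + 1))))) :=
        subset_closure (Set.mem_insert_of_mem _ (Finset.mem_coe.mpr
          (Finset.mem_erase.mpr ⟨fun hhg => hgh hhg.symm, hhS'⟩)))
      have hp' : (h⁻¹ * g) ∈ closure (insert (h⁻¹ * g) ((S.erase g : Finset _) :
          Set (Equiv.Perm (Fin (N + 1))))) := subset_closure (Set.mem_insert _ _)
      have hmm := mul_mem hh' hp'
      rwa [mul_inv_cancel_left] at hmm
    · intro x hx
      rcases lt_or_eq_of_le hx with hlt | heq
      · have h1 : g x = x := mp_fix hgne hlt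
        have h2 : h⁻¹ x = x := mp_fix_inv hhne (hmp ▸ hlt)
        simp [Equiv.Perm.mul_apply, h1, h2]
      · subst heq
        have : (h⁻¹ * g) (mp g) = h⁻¹ (g (mp g)) := rfl
        rw [this, himg]
        rw [hmp]
        exact h.symm_apply_apply _
  case pos =>
    -- build the edge graph
    set G : SimpleGraph (Fin (N + 1)) :=
      { Adj := fun x y => x ≠ y ∧ ∃ g ∈ S, s(mp g, g (mp g)) = s(x, y)
        symm := ⟨by
          rintro x y ⟨hne, g, hgS, hedge⟩
          exact ⟨hne.symm, g, hgS, by rw [hedge, Sym2.eq_swap]⟩⟩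
        loopless := ⟨fun x h => h.1 rfl⟩ } with hG
    haveI : DecidableRel G.Adj := Classical.decRel _
    have hedge_mem : ∀ g ∈ S, s(mp g, g (mp g)) ∈ G.edgeFinset := by
      intro g hgS
      rw [SimpleGraph.mem_edgeFinset, SimpleGraph.mem_edgeSet]
      exact ⟨(mp_lt (hSne1 g hgS)).ne, g, hgS, rfl⟩
    have hcard2 : S.card ≤ G.edgeFinset.card :=
      Finset.card_le_card_of_injOn _ hedge_mem hinj
    have hnoacyc : ¬ G.IsAcyclic := by
      intro hac
      have := forest_bound G hac
      rw [Fintype.card_fin] at this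
      omega
    rw [SimpleGraph.IsAcyclic] at hnoacyc
    push_neg at hnoacyc
    obtain ⟨v, c, hcyc⟩ := hnoacyc
    -- the minimal vertex of the cycle
    have hvne : v ∈ c.support.toFinset := List.mem_toFinset.mpr c.start_mem_support
    set u : Fin (N + 1) := c.support.toFinset.min' ⟨v, hvne⟩ with hu
    have humem : u ∈ c.support := List.mem_toFinset.mp (Finset.min'_mem _ _)
    have humin : ∀ z ∈ c.support, u ≤ z := fun z hz =>
      Finset.min'_le _ _ (List.mem_toFinset.mpr hz)
    set c' : G.Walk u u := c.rotate u humem with hc'def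
    have hc' : c'.IsCycle := hcyc.rotate humem
    have hsup' : ∀ z ∈ c'.support, u ≤ z := by
      intro z hz
      rw [SimpleGraph.Walk.support_eq_cons] at hz
      rcases List.mem_cons.mp hz with h | h
      · exact h ▸ le_refl u
      · have hperm := SimpleGraph.Walk.support_rotate c u humem
        rw [← hc'def] at hperm
        have : z ∈ c.support.tail := hperm.perm.mem_iff.mp h
        exact humin z (List.mem_of_mem_tail this)
    -- destructure the cycle
    obtain ⟨w, hadj, q, hq⟩ := SimpleGraph.Walk.not_nil_iff.mp hc'.not_nil
    obtain ⟨hneuw, g₁, hg₁S, hedge₁⟩ := hadj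
    have hg₁ne : g₁ ≠ 1 := hSne1 g₁ hg₁S
    have hwsup : w ∈ c'.support := by
      rw [hq, SimpleGraph.Walk.support_cons]
      exact List.mem_cons_of_mem _ q.start_mem_support
    have huw : u < w := lt_of_le_of_ne (hsup' w hwsup) hneuw
    have hmg₁ : mp g₁ = u ∧ g₁ (mp g₁) = w := by
      rcases Sym2.eq_iff.mp hedge₁ with ⟨h1, h2⟩ | ⟨h1, h2⟩
      · exact ⟨h1, h2⟩
      · exfalso
        have hlt := mp_lt hg₁ne
        rw [h2] at hlt
        rw [h1] at hlt
        exact absurd (huw.trans hlt) (lt_irrefl _)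
    obtain ⟨ha, hb⟩ := hmg₁
    -- the first edge does not reappear in the tail
    have hedgeq : s(u, w) ∉ q.edges := by
      have hnd := hc'.isTrail.edges_nodup
      rw [hq, SimpleGraph.Walk.edges_cons] at hnd
      exact (List.nodup_cons.mp hnd).1
    have hsupq : ∀ z ∈ q.support, u ≤ z := by
      intro z hz
      apply hsup'
      rw [hq, SimpleGraph.Walk.support_cons]
      exact List.mem_cons_of_mem _ hz
    -- the auxiliary relation
    set R : Fin (N + 1) → Fin (N + 1) → Prop := fun x y =>
      ∃ g ∈ S, g ≠ g₁ ∧ u ≤ mp g ∧ s(mp g, g (mp g)) = s(x, y) with hR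
    have hwalk : ∀ (x y : Fin (N + 1)) (t : G.Walk x y),
        (∀ z ∈ t.support, u ≤ z) → s(u, w) ∉ t.edges →
        Relation.ReflTransGen R x y := by
      intro x y t
      induction t with
      | nil => intro _ _; exact Relation.ReflTransGen.refl
      | @cons x z y hadj' t ih =>
        intro hsupp hedges
        obtain ⟨hnexz, g, hgS, hedgeg⟩ := hadj'
        have hgne : g ≠ 1 := hSne1 g hgS
        have hggg₁ : g ≠ g₁ := by
          intro hgg
          subst hgg
          apply hedges
          rw [SimpleGraph.Walk.edges_cons, ← hedge₁, hedgeg]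
          exact List.mem_cons_self
        have hxsup : u ≤ x := hsupp x (by
          rw [SimpleGraph.Walk.support_cons]; exact List.mem_cons_self)
        have hzsup : u ≤ z := hsupp z (by
          rw [SimpleGraph.Walk.support_cons]
          exact List.mem_cons_of_mem _ t.start_mem_support)
        have hle : u ≤ mp g := by
          rcases Sym2.eq_iff.mp hedgeg with ⟨h1, -⟩ | ⟨h1, -⟩
          · exact h1 ▸ hxsup
          · exact h1 ▸ hzsup
        refine Relation.ReflTransGen.head ⟨g, hgS, hggg₁, hle, hedgeg⟩ (ih ?_ ?_)
        · intro z' hz'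
          exact hsupp z' (by
            rw [SimpleGraph.Walk.support_cons]; exact List.mem_cons_of_mem _ hz')
        · intro hmem
          exact hedges (by
            rw [SimpleGraph.Walk.edges_cons]; exact List.mem_cons_of_mem _ hmem)
    -- turn the reflexive-transitive closure into a permutation
    have hrtg : ∀ x y : Fin (N + 1), Relation.ReflTransGen R x y →
        ∃ π : Equiv.Perm (Fin (N + 1)),
          π ∈ closure ((S.erase g₁ : Finset _) : Set (Equiv.Perm (Fin (N + 1)))) ∧
          (∀ z, z < u → π z = z) ∧ π x = y := by
      intro x y h
      induction h with
      | refl => exact ⟨1, one_mem _, fun z _ => rfl, rfl⟩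
      | tail h₁ h₂ ih =>
        obtain ⟨π, hπcl, hπfix, hπx⟩ := ih
        rename_i b c
        obtain ⟨g, hgS, hgne₁, hule, hedgeg⟩ := h₂
        have hgne : g ≠ 1 := hSne1 g hgS
        have hgcl : g ∈ closure ((S.erase g₁ : Finset _) :
            Set (Equiv.Perm (Fin (N + 1)))) :=
          subset_closure (Finset.mem_coe.mpr (Finset.mem_erase.mpr ⟨hgne₁, hgS⟩))
        rcases Sym2.eq_iff.mp hedgeg with ⟨h1, h2⟩ | ⟨h1, h2⟩
        · refine ⟨g * π, mul_mem hgcl hπcl, ?_, ?_⟩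
          · intro z hz
            have : π z = z := hπfix z hz
            have hfixg : g z = z := mp_fix hgne (lt_of_lt_of_le hz hule)
            simp [Equiv.Perm.mul_apply, this, hfixg]
          · have : (g * π) x = g (π x) := rfl
            rw [this, hπx, ← h1, h2]
        · refine ⟨g⁻¹ * π, mul_mem (inv_mem hgcl) hπcl, ?_, ?_⟩
          · intro z hz
            have : π z = z := hπfix z hz
            have hfixg : g⁻¹ z = z := mp_fix_inv hgne (lt_of_lt_of_le hz hule)
            simp [Equiv.Perm.mul_apply, this, hfixg]
          · have heq : (g⁻¹ * π) x = g⁻¹ (π x) := rfl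
            rw [heq, hπx]
            rw [← h1, ← h2]
            exact g.symm_apply_apply _
    obtain ⟨π, hπcl, hπfix, hπw⟩ := hrtg w u (hwalk w u q hsupq hedgeq)
    -- the replacement permutation
    set P : Equiv.Perm (Fin (N + 1)) := π * g₁ with hP
    have hclmono : closure ((S.erase g₁ : Finset _) : Set (Equiv.Perm (Fin (N + 1)))) ≤ H := by
      rw [← hSH]
      exact closure_mono (fun x hx =>
        Finset.mem_coe.mpr (Finset.mem_of_mem_erase (Finset.mem_coe.mp hx)))
    have hPH : P ∈ H := mul_mem (hclmono hπcl) (hSsub hg₁S)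
    refine improve H S hS1 hSH hmin hg₁S (p := P) hPH ?_ ?_ |>.elim
    · -- g₁ = π⁻¹ * P
      have hπ' : π ∈ closure (insert P ((S.erase g₁ : Finset _) :
          Set (Equiv.Perm (Fin (N + 1))))) :=
        closure_mono (Set.subset_insert _ _) hπcl
      have hP' : P ∈ closure (insert P ((S.erase g₁ : Finset _) :
          Set (Equiv.Perm (Fin (N + 1))))) := subset_closure (Set.mem_insert _ _)
      have hmm := mul_mem (inv_mem hπ') hP'
      rwa [hP, inv_mul_cancel_left] at hmm
    · intro x hx
      rw [ha] at hx
      have happ : P x = π (g₁ x) := rfl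
      rcases lt_or_eq_of_le hx with hlt | heq
      · have h1 : g₁ x = x := mp_fix hg₁ne (ha ▸ hlt)
        rw [happ, h1]
        exact hπfix x hlt
      · have h1 : g₁ u = w := by rw [← ha]; exact hb
        rw [happ, heq, h1, hπw]

end JerrumAux

/-- **Jerrum's bound.** Every subgroup of the symmetric group on `n ≥ 1` points can be
generated by at most `n - 1` elements. -/
theorem subgroup_of_perm_generated_by_card_sub_one (n : ℕ) (hn : 1 ≤ n)
    (H : Subgroup (Equiv.Perm (Fin n))) :
    ∃ S : Finset (Equiv.Perm (Fin n)),
      S.card ≤ n - 1 ∧ Subgroup.closure (S : Set (Equiv.Perm (Fin n))) = H := by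
  obtain ⟨m, rfl⟩ : ∃ m, n = m + 1 := ⟨n - 1, by omega⟩
  obtain ⟨S, h1, h2⟩ := JerrumAux.key H
  exact ⟨S, by simpa using h1, h2⟩
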